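/- Let f : [0,1]^(ℕ*) → ℝ be monotone, homogeneous, and independent (as for finite index sets, where independence holds for any partition of ℕ* into two sets). Suppose f is recursive: for all s, s' ∈ [0,1]^(ℕ*), f(s'_1, s'_2, …) · f(0, s_1, s_2, …) = f(s_1, s_2, …) · f(0, s'_1, s'_2, …), where (0, s_1, s_2, …) denotes the shifted sequence. Suppose f satisfies the long-run property: for all s and all ε > 0, there exists a sequence z ∈ [0,1]^(ℕ*) with z_k → 0 such that f(s·z) ≥ f(s) − ε (where s·z is the coordinatewise product). Then there exist δ ∈ [0,1) and λ ≥ 0 such that f(s) = λ · ∑_{k=1}^∞ δ^{k−1} s_k for all s. -/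

import Mathlib

open Finset Filter

/-- `s` lies in the domain `[0,1]^ℕ` (coordinates indexed from 0, standing for ℕ*). -/
def InDom (s : ℕ → ℝ) : Prop := ∀ k, 0 ≤ s k ∧ s k ≤ 1

/-- combine coordinates: those in `J` from `u`, the rest from `v`. -/
def combine (J : Set ℕ) [DecidablePred (· ∈ J)] (u v : ℕ → ℝ) : ℕ → ℝ :=
  fun k => if k ∈ J then u k else v k

/-- the shifted sequence `(0, s₁, s₂, …)`. -/
def shift (s : ℕ → ℝ) : ℕ → ℝ := fun k => if k = 0 then 0 else s (k - 1)

def Monotone' (f : (ℕ → ℝ) → ℝ) : Prop :=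
  ∀ s s' : ℕ → ℝ, InDom s → InDom s' → (∀ k, s k ≤ s' k) → f s ≤ f s'

def Homogeneous' (f : (ℕ → ℝ) → ℝ) : Prop :=
  ∀ (c : ℝ) (s : ℕ → ℝ), 0 ≤ c → InDom s → InDom (fun k => c * s k) →
    f (fun k => c * s k) = c * f s

def Independent' (f : (ℕ → ℝ) → ℝ) : Prop :=
  ∀ (J : Set ℕ) (_ : DecidablePred (· ∈ J)) (u u' v v' : ℕ → ℝ),
    InDom u → InDom u' → InDom v → InDom v' →
    f (combine J u v) - f (combine J u v') = f (combine J u' v) - f (combine J u' v')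

def Recursive' (f : (ℕ → ℝ) → ℝ) : Prop :=
  ∀ s s' : ℕ → ℝ, InDom s → InDom s' →
    f s' * f (shift s) = f s * f (shift s')

def LongRun (f : (ℕ → ℝ) → ℝ) : Prop :=
  ∀ s : ℕ → ℝ, InDom s → ∀ ε : ℝ, 0 < ε →
    ∃ z : ℕ → ℝ, InDom z ∧ Tendsto z atTop (nhds 0) ∧
      f (fun k => s k * z k) ≥ f s - ε

section Aux

variable (f : (ℕ → ℝ) → ℝ)

/-- unit vector -/
def ee (n : ℕ) : ℕ → ℝ := fun k => if k = n then 1 else 0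

lemma dom_ee (n : ℕ) : InDom (ee n) := by
  intro k; unfold ee; split <;> norm_num

lemma dom_zero : InDom (fun _ => (0:ℝ)) := by intro k; norm_num

lemma dom_one : InDom (fun _ => (1:ℝ)) := by intro k; norm_num

lemma dom_if (p : ℕ → Prop) [DecidablePred p] (s : ℕ → ℝ) (hs : InDom s) :
    InDom (fun k => if p k then s k else 0) := by
  intro k; dsimp only; split
  · exact hs k
  · norm_num

lemma dom_if' (p : ℕ → Prop) [DecidablePred p] (s : ℕ → ℝ) (hs : InDom s) :
    InDom (fun k => if p k then 0 else s k) := by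
  intro k; dsimp only; split
  · norm_num
  · exact hs k

lemma dom_shift (s : ℕ → ℝ) (hs : InDom s) : InDom (shift s) := by
  intro k; unfold shift; split
  · norm_num
  · exact hs _

lemma dom_shifted (n : ℕ) (s : ℕ → ℝ) (hs : InDom s) : InDom (fun k => s (k + n)) :=
  fun k => hs (k + n)

lemma shift_ee (n : ℕ) : shift (ee n) = ee (n + 1) := by
  funext k
  unfold shift ee
  rcases k with _ | m
  · simp
  · simp only [Nat.succ_ne_zero, if_false, Nat.succ_sub_one]
    have : (m = n) ↔ (m + 1 = n + 1) := by omega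
    split <;> split <;> first | rfl | omega

lemma f_zero (hhom : Homogeneous' f) : f (fun _ => 0) = 0 := by
  have h := hhom 0 (fun _ => 0) le_rfl dom_zero (by simpa using dom_zero)
  simpa using h

lemma f_nonneg (hmono : Monotone' f) (hhom : Homogeneous' f) (s : ℕ → ℝ) (hs : InDom s) : 0 ≤ f s := by
  have h := hmono (fun _ => 0) s dom_zero hs (fun k => (hs k).1)
  rwa [f_zero f hhom] at h

/-- Splitting of `f` across a decidable predicate. -/
lemma f_split (hhom : Homogeneous' f) (hind : Independent' f) (p : ℕ → Prop) [inst : DecidablePred p] (s : ℕ → ℝ) (hs : InDom s) :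
    f s = f (fun k => if p k then s k else 0) + f (fun k => if p k then 0 else s k) := by
  have h := hind (setOf p) inst s (fun _ => 0) s (fun _ => 0) hs dom_zero hs dom_zero
  have h1 : @combine (setOf p) inst s s = s := by
    funext k; unfold combine; exact ite_self _
  have h2 : @combine (setOf p) inst (fun _ => (0:ℝ)) (fun _ => (0:ℝ)) = (fun _ => (0:ℝ)) := by
    funext k; unfold combine; exact ite_self _
  have h3 : @combine (setOf p) inst s (fun _ => (0:ℝ)) = (fun k => if p k then s k else 0) := by
    funext k; rfl
  have h4 : @combine (setOf p) inst (fun _ => (0:ℝ)) s = (fun k => if p k then 0 else s k) := by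
    funext k; rfl
  rw [h1, h2, h3, h4, f_zero f hhom] at h
  linarith

end Aux

section Aux2

variable (f : (ℕ → ℝ) → ℝ)

/-- value on the head truncation is a weighted sum -/
lemma f_trunc (hhom : Homogeneous' f) (hind : Independent' f)
    (n : ℕ) (s : ℕ → ℝ) (hs : InDom s) :
    f (fun k => if k < n then s k else 0) = ∑ k ∈ Finset.range n, f (ee k) * s k := by
  induction n with
  | zero =>
      simp only [Nat.not_lt_zero, if_false, Finset.range_zero, Finset.sum_empty]
      exact f_zero f hhom
  | succ n ih =>
      set g : ℕ → ℝ := fun k => if k < n + 1 then s k else 0 with hg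
      have hgdom : InDom g := dom_if _ s hs
      have hsplit := f_split f hhom hind (fun k => k = n) g hgdom
      beta_reduce at hsplit
      have h1 : (fun k => if k = n then g k else 0) = (fun k => s n * ee n k) := by
        funext k
        by_cases hk : k = n
        · subst hk; simp [hg, ee, mul_comm]
        · simp [hk, ee]
      have h2 : (fun k => if k = n then 0 else g k) = (fun k => if k < n then s k else 0) := by
        funext k
        simp only [hg]
        split_ifs <;> first | rfl | omega
      have hdom1 : InDom (fun k => s n * ee n k) := by
        intro k
        unfold ee
        rcases hs n with ⟨h0, h1⟩
        dsimp only
        split <;> constructor <;> nlinarith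
      have h3 : f (fun k => s n * ee n k) = s n * f (ee n) := by
        exact hhom (s n) (ee n) (hs n).1 (dom_ee n) hdom1
      rw [h1, h2, h3, ih] at hsplit
      rw [hsplit, Finset.sum_range_succ]
      ring

end Aux2

section Aux3

variable (f : (ℕ → ℝ) → ℝ)

/-- tail values via the shift relation -/
lemma f_tail (δ : ℝ) (hsh : ∀ s, InDom s → f (shift s) = δ * f s)
    (n : ℕ) (s : ℕ → ℝ) (hs : InDom s) :
    f (fun k => if k < n then 0 else s k) = δ ^ n * f (fun k => s (k + n)) := by
  induction n generalizing s with
  | zero => simp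
  | succ n ih =>
      have hw : (fun k => if k < n + 1 then 0 else s k)
          = shift (fun k => if k < n then 0 else s (k + 1)) := by
        funext k
        rcases k with _ | m
        · simp [shift]
        · simp only [shift, Nat.succ_ne_zero, if_false, Nat.succ_sub_one]
          split_ifs <;> first | rfl | omega
      have hdom : InDom (fun k => if k < n then 0 else s (k + 1)) :=
        dom_if' _ _ (fun k => hs (k + 1))
      rw [hw, hsh _ hdom, ih _ (fun k => hs (k + 1))]
      have h2 : (fun k => s (k + n + 1)) = (fun k => s (k + (n + 1))) := by
        funext k; congr 1
      rw [h2]; ring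

end Aux3

/-- a monotone, homogeneous, independent, recursive aggregation
function on `[0,1]^ℕ` satisfying the long-run property is a discounted sum. -/
theorem stmt1 (f : (ℕ → ℝ) → ℝ)
    (hmono : Monotone' f) (hhom : Homogeneous' f) (hind : Independent' f)
    (hrec : Recursive' f) (hlr : LongRun f) :
    ∃ δ lam : ℝ, 0 ≤ δ ∧ δ < 1 ∧ 0 ≤ lam ∧
      ∀ s : ℕ → ℝ, InDom s → f s = lam * ∑' k : ℕ, δ ^ k * s k := by
  classical
  have hann : ∀ k, 0 ≤ f (ee k) := fun k => f_nonneg f hmono hhom _ (dom_ee k)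
  have hcross : ∀ j k, f (ee k) * f (ee (j + 1)) = f (ee j) * f (ee (k + 1)) := by
    intro j k
    have h := hrec (ee j) (ee k) (dom_ee j) (dom_ee k)
    rwa [shift_ee, shift_ee] at h
  -- head decomposition
  have hhead : ∀ (n : ℕ) (s : ℕ → ℝ), InDom s →
      f s = (∑ k ∈ Finset.range n, f (ee k) * s k) + f (fun k => if k < n then 0 else s k) := by
    intro n s hs
    have h := f_split f hhom hind (fun k => k < n) s hs
    beta_reduce at h
    rw [f_trunc f hhom hind n s hs] at h
    exact h
  by_cases h0 : f (ee 0) = 0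
  · -- degenerate case : f ≡ 0
    have hak : ∀ k, f (ee k) = 0 := by
      intro k
      induction k with
      | zero => exact h0
      | succ k ih =>
          have h := hcross k (k + 1)
          rw [ih, zero_mul] at h
          exact mul_self_eq_zero.1 h
    have hM : f (fun _ => (1:ℝ)) = 0 := by
      by_contra hM
      have hMpos : 0 < f (fun _ => (1:ℝ)) :=
        lt_of_le_of_ne (f_nonneg f hmono hhom _ dom_one) (Ne.symm hM)
      obtain ⟨z, hz, hz0, hge⟩ := hlr (fun _ => 1) dom_one (f (fun _ => (1:ℝ)) / 2) (by linarith)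
      have hfz : (fun k => (1:ℝ) * z k) = z := by funext k; ring
      rw [hfz] at hge
      have hev : ∀ᶠ k in atTop, z k < 1/4 := by
        have h4 : Set.Iio (1/4 : ℝ) ∈ nhds (0:ℝ) := Iio_mem_nhds (by norm_num)
        exact hz0.eventually_mem h4
      obtain ⟨N, hN⟩ := eventually_atTop.1 hev
      have hle : ∀ k, (if k < N then 0 else z k) ≤ (1/4 : ℝ) * 1 := by
        intro k
        split_ifs with hk
        · norm_num
        · have := hN k (by omega)
          linarith
      have htail : f (fun k => if k < N then 0 else z k) ≤ 1/4 * f (fun _ => (1:ℝ)) := by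
        have hm := hmono (fun k => if k < N then 0 else z k) (fun _ => (1/4 : ℝ) * 1)
          (dom_if' _ z hz) (by intro k; norm_num) hle
        have hh := hhom (1/4) (fun _ => (1:ℝ)) (by norm_num) dom_one (by intro k; norm_num)
        linarith
      have hdec := hhead N z hz
      have hsum0 : (∑ k ∈ Finset.range N, f (ee k) * z k) = 0 := by
        apply Finset.sum_eq_zero
        intro k _
        rw [hak k, zero_mul]
      rw [hsum0, zero_add] at hdec
      linarith
    refine ⟨0, 0, le_rfl, by norm_num, le_rfl, ?_⟩
    intro s hs
    have h1 := hmono s (fun _ => 1) hs dom_one (fun k => (hs k).2)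
    have h2 := f_nonneg f hmono hhom s hs
    rw [zero_mul]
    linarith
  · -- main case
    have ha0 : 0 < f (ee 0) := lt_of_le_of_ne (hann 0) (Ne.symm h0)
    set δ : ℝ := f (ee 1) / f (ee 0) with hδ
    have hδ0 : 0 ≤ δ := div_nonneg (hann 1) (hann 0)
    have hsh : ∀ s, InDom s → f (shift s) = δ * f s := by
      intro s hs
      have h := hrec s (ee 0) hs (dom_ee 0)
      rw [shift_ee] at h
      rw [hδ, div_mul_eq_mul_div, eq_div_iff (ne_of_gt ha0)]
      linear_combination h
    have hpow : ∀ k, f (ee k) = f (ee 0) * δ ^ k := by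
      intro k
      induction k with
      | zero => simp
      | succ k ih =>
          have h1 : f (ee (k + 1)) = δ * f (ee k) := by
            rw [← shift_ee, hsh _ (dom_ee k)]
          rw [h1, ih]; ring
    set M : ℝ := f (fun _ => (1:ℝ)) with hMdef
    have hMnn : 0 ≤ M := f_nonneg f hmono hhom _ dom_one
    have hsumM : ∀ n : ℕ, (∑ k ∈ Finset.range n, f (ee k)) ≤ M := by
      intro n
      have h := hhead n (fun _ => 1) dom_one
      have htl : 0 ≤ f (fun k => if k < n then 0 else (1:ℝ)) :=
        f_nonneg f hmono hhom _ (dom_if' _ _ dom_one)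
      simp only [mul_one] at h
      linarith
    have hδ1 : δ < 1 := by
      by_contra hδ1
      push_neg at hδ1
      obtain ⟨n, hn⟩ := exists_nat_gt (M / f (ee 0))
      have hMn : M < n * f (ee 0) := by
        rw [div_lt_iff₀ ha0] at hn
        linarith
      have hge : (n : ℝ) * f (ee 0) ≤ ∑ k ∈ Finset.range n, f (ee k) := by
        calc (n : ℝ) * f (ee 0) = ∑ _k ∈ Finset.range n, f (ee 0) := by
              rw [Finset.sum_const, Finset.card_range, nsmul_eq_mul]
          _ ≤ ∑ k ∈ Finset.range n, f (ee k) := by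
              apply Finset.sum_le_sum
              intro k _
              rw [hpow k]
              nlinarith [one_le_pow₀ hδ1 (n := k), pow_nonneg hδ0 k]
      linarith [hsumM n]
    refine ⟨δ, f (ee 0), hδ0, hδ1, hann 0, ?_⟩
    intro s hs
    -- key decomposition
    have key : ∀ n : ℕ, f s = f (ee 0) * (∑ k ∈ Finset.range n, δ ^ k * s k)
        + δ ^ n * f (fun k => s (k + n)) := by
      intro n
      have h := hhead n s hs
      rw [f_tail f δ hsh n s hs] at h
      rw [h, Finset.mul_sum]
      congr 1
      apply Finset.sum_congr rfl
      intro k _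
      rw [hpow k]; ring
    have hσ : ∀ n : ℕ, 0 ≤ f (fun k => s (k + n)) ∧ f (fun k => s (k + n)) ≤ M := by
      intro n
      constructor
      · exact f_nonneg f hmono hhom _ (dom_shifted n s hs)
      · exact hmono _ _ (dom_shifted n s hs) dom_one (fun k => (hs (k + n)).2)
    have hw : Summable (fun k => δ ^ k * s k) := by
      apply Summable.of_nonneg_of_le
        (fun k => mul_nonneg (pow_nonneg hδ0 k) (hs k).1)
        (fun k => mul_le_of_le_one_right (pow_nonneg hδ0 k) (hs k).2)
      exact summable_geometric_of_lt_one hδ0 hδ1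
    have htend1 : Tendsto (fun n => ∑ k ∈ Finset.range n, δ ^ k * s k) atTop
        (nhds (∑' k, δ ^ k * s k)) := hw.hasSum.tendsto_sum_nat
    have hgeq : ∀ n : ℕ, f s - f (ee 0) * (∑ k ∈ Finset.range n, δ ^ k * s k)
        = δ ^ n * f (fun k => s (k + n)) := fun n => by linarith [key n]
    have hg0 : Tendsto
        (fun n => f s - f (ee 0) * (∑ k ∈ Finset.range n, δ ^ k * s k)) atTop (nhds 0) := by
      apply squeeze_zero (g := fun n : ℕ => δ ^ n * M)
      · intro n
        rw [hgeq n]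
        exact mul_nonneg (pow_nonneg hδ0 n) (hσ n).1
      · intro n
        rw [hgeq n]
        exact mul_le_mul_of_nonneg_left (hσ n).2 (pow_nonneg hδ0 n)
      · have h := (tendsto_pow_atTop_nhds_zero_of_lt_one hδ0 hδ1).mul_const M
        simpa using h
    have htend2 : Tendsto (fun n => f (ee 0) * ∑ k ∈ Finset.range n, δ ^ k * s k) atTop
        (nhds (f s)) := by
      have h := (tendsto_const_nhds (x := f s) (f := atTop)).sub hg0
      simpa using h
    exact tendsto_nhds_unique htend2 (htend1.const_mul (f (ee 0)))
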